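/- Let m > 3 and let k, ℓ be integers relatively prime to m with 2 ≤ k, ℓ ≤ m−2 and kℓ ≡ 1 (mod m). Then the generalized Petersen graphs P(m,k) and P(m,ℓ) are isomorphic as simple graphs. -/

import Mathlib

namespace Toggle

variable {V : Type*} [Fintype V] [DecidableEq V]

/-- The closed neighborhood `N[v]` of a vertex as a `Finset`. -/
def closedNbhd (G : SimpleGraph V) [DecidableRel G.Adj] (v : V) : Finset V :=
  insert v (G.neighborFinset v)

/-- The result of a Toggle move at `v`: flip the weight of every vertex in `N[v]`. -/
def move (G : SimpleGraph V) [DecidableRel G.Adj] (ω : V → Bool) (v : V) : V → Bool :=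
  fun u => if u ∈ closedNbhd G v then !(ω u) else ω u

/-- Total weight of a position. -/
def weight (ω : V → Bool) : ℕ := (Finset.univ.filter (fun u => ω u = true)).card

/-- Weight of a position over the closed neighborhood of `v`. -/
def nbhdWeight (G : SimpleGraph V) [DecidableRel G.Adj] (ω : V → Bool) (v : V) : ℕ :=
  ((closedNbhd G v).filter (fun u => ω u = true)).card

/-- A Toggle move at `v` is legal iff `ω v = 1` and the move strictly decreases the
weight over `N[v]`. -/
def IsLegal (G : SimpleGraph V) [DecidableRel G.Adj] (ω : V → Bool) (v : V) : Prop :=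
  ω v = true ∧ nbhdWeight G (move G ω v) v < nbhdWeight G ω v

instance (G : SimpleGraph V) [DecidableRel G.Adj] (ω : V → Bool) (v : V) :
    Decidable (IsLegal G ω v) :=
  inferInstanceAs (Decidable (ω v = true ∧ nbhdWeight G (move G ω v) v < nbhdWeight G ω v))

theorem weight_move_lt (G : SimpleGraph V) [DecidableRel G.Adj] {ω : V → Bool} {v : V}
    (h : IsLegal G ω v) : weight (move G ω v) < weight ω := by
  have key : ∀ ψ : V → Bool,
      weight ψ = ((closedNbhd G v).filter (fun u => ψ u = true)).card
        + ((Finset.univ \ closedNbhd G v).filter (fun u => ψ u = true)).card := by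
    intro ψ
    rw [weight, ← Finset.card_union_of_disjoint
      (Finset.disjoint_filter_filter Finset.disjoint_sdiff)]
    congr 1
    ext u
    simp only [Finset.mem_filter, Finset.mem_union, Finset.mem_sdiff, Finset.mem_univ,
      true_and]
    tauto
  have hout : ((Finset.univ \ closedNbhd G v).filter (fun u => move G ω v u = true))
      = ((Finset.univ \ closedNbhd G v).filter (fun u => ω u = true)) := by
    apply Finset.filter_congr
    intro u hu
    rw [Finset.mem_sdiff] at hu
    simp [move, hu.2]
  have h2 := h.2
  rw [key (move G ω v), key ω, hout]
  unfold nbhdWeight at h2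
  omega

/-- Minimal excludant of a finite set of naturals. -/
noncomputable def mex (s : Finset ℕ) : ℕ := sInf {n : ℕ | n ∉ s}

/-- The Nimber (Grundy value) of a Toggle position. -/
noncomputable def grundy (G : SimpleGraph V) [DecidableRel G.Adj] (ω : V → Bool) : ℕ :=
  mex ((Finset.univ.filter (fun v => IsLegal G ω v)).attach.image
    (fun v => grundy G (move G ω v.1)))
termination_by weight ω
decreasing_by
  have hv := v.2
  rw [Finset.mem_filter] at hv
  exact weight_move_lt G hv.2

/-- One legal Toggle move transforms `ω` into `ω'`. -/
def Step (G : SimpleGraph V) [DecidableRel G.Adj] (ω ω' : V → Bool) : Prop :=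
  ∃ v, IsLegal G ω v ∧ ω' = move G ω v

/-- `ω'` is reachable from `ω` by a (possibly empty) sequence of legal moves. -/
def Reach (G : SimpleGraph V) [DecidableRel G.Adj] (ω ω' : V → Bool) : Prop :=
  Relation.ReflTransGen (Step G) ω ω'

/-- `v` is terminally unplayable at `ω`: unplayable at `ω` and at every position
reachable from `ω`. -/
def TerminallyUnplayable (G : SimpleGraph V) [DecidableRel G.Adj] (ω : V → Bool) (v : V) :
    Prop :=
  ∀ ω', Reach G ω ω' → ¬ IsLegal G ω' v

/-- `v` is penultimately unplayable for the initial position `ω₀`: at every position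
reachable from `ω₀`, after any legal move at a vertex `u ∈ N[v]`, the vertex `v` is
terminally unplayable. -/
def PenultimatelyUnplayableAt (G : SimpleGraph V) [DecidableRel G.Adj] (ω₀ : V → Bool)
    (v : V) : Prop :=
  ∀ ω', Reach G ω₀ ω' → ∀ u ∈ closedNbhd G v, IsLegal G ω' u →
    TerminallyUnplayable G (move G ω' u) v

/-- The position `ω₀` is penultimately unplayable if every vertex is. -/
def PenultimatelyUnplayable (G : SimpleGraph V) [DecidableRel G.Adj] (ω₀ : V → Bool) :
    Prop :=
  ∀ v, PenultimatelyUnplayableAt G ω₀ v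

/-- The path graph on `Fin n`, vertices `0, 1, …, n-1` in order. -/
def pathGraph (n : ℕ) : SimpleGraph (Fin n) :=
  SimpleGraph.fromRel (fun a b => (a : ℕ) + 1 = (b : ℕ))

instance (n : ℕ) : DecidableRel (pathGraph n).Adj := fun a b =>
  decidable_of_iff _ (SimpleGraph.fromRel_adj _ a b).symm

/-- The 2×m grid graph `L_{2,m}` (0-indexed rows and columns). -/
def gridGraph (m : ℕ) : SimpleGraph (Fin 2 × Fin m) :=
  SimpleGraph.fromRel (fun a b =>
    (a.1 = b.1 ∧ (a.2 : ℕ) + 1 = (b.2 : ℕ)) ∨ (a.2 = b.2 ∧ (a.1 : ℕ) + 1 = (b.1 : ℕ)))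

instance (m : ℕ) : DecidableRel (gridGraph m).Adj := fun a b =>
  decidable_of_iff _ (SimpleGraph.fromRel_adj _ a b).symm

/-- The generalized Petersen graph `P(m,k)`; the vertex `(0, i)` is the outer vertex
`u_i` and `(1, i)` is the inner vertex `w_i` (0-indexed). -/
def petersen (m k : ℕ) : SimpleGraph (Fin 2 × Fin m) :=
  SimpleGraph.fromRel (fun a b =>
    (a.1 = 0 ∧ b.1 = 0 ∧ ((a.2 : ℕ) + 1) % m = (b.2 : ℕ)) ∨
    (a.1 = 0 ∧ b.1 = 1 ∧ a.2 = b.2) ∨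
    (a.1 = 1 ∧ b.1 = 1 ∧ ((a.2 : ℕ) + k) % m = (b.2 : ℕ)))

instance (m k : ℕ) : DecidableRel (petersen m k).Adj := fun a b =>
  decidable_of_iff _ (SimpleGraph.fromRel_adj _ a b).symm

/-- The position on `P(m,k)` where every outer vertex has weight 1 and every inner
vertex has weight 0. -/
def P01 (m : ℕ) : Fin 2 × Fin m → Bool := fun p => decide (p.1 = 0)

/-- The position on `P(m,k)` where every inner vertex has weight 1 and every outer
vertex has weight 0. -/
def P10 (m : ℕ) : Fin 2 × Fin m → Bool := fun p => decide (p.1 = 1)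

/-- The position where every vertex has weight 1. -/
def P11 (m : ℕ) : Fin 2 × Fin m → Bool := fun _ => true

/-- The Toggle position `H_m` on `L_{2,m}` (columns 0-indexed): for `m ≠ 3`, weight 0
exactly at `(0,0), (0,m-1), (1,0), (1,1), (1,m-2), (1,m-1)`; for `m = 3`, weight 0
exactly at `(0,0), (0,2), (1,0), (1,2)`. -/
def Hpos (m : ℕ) : Fin 2 × Fin m → Bool := fun p =>
  if m = 3 then !(decide ((p.2 : ℕ) = 0 ∨ (p.2 : ℕ) = 2))
  else !(decide ((p.1 = 0 ∧ ((p.2 : ℕ) = 0 ∨ (p.2 : ℕ) = m - 1)) ∨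
                 (p.1 = 1 ∧ ((p.2 : ℕ) ≤ 1 ∨ m - 2 ≤ (p.2 : ℕ)))))

/-- The Toggle position `D_m` on `L_{2,m}` (columns 0-indexed): weight 0 exactly at
`(0,0), (0,m-2), (0,m-1), (1,0), (1,1), (1,m-1)`. -/
def Dpos (m : ℕ) : Fin 2 × Fin m → Bool := fun p =>
  !(decide ((p.1 = 0 ∧ ((p.2 : ℕ) = 0 ∨ m - 2 ≤ (p.2 : ℕ))) ∨
            (p.1 = 1 ∧ ((p.2 : ℕ) ≤ 1 ∨ (p.2 : ℕ) = m - 1))))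

/-- The Nimber of the position `H_m`. -/
noncomputable def GH (m : ℕ) : ℕ := grundy (gridGraph m) (Hpos m)

/-- The Nimber of the position `D_m`. -/
noncomputable def GD (m : ℕ) : ℕ := grundy (gridGraph m) (Dpos m)

/-- The cycle graph `C_m` on `Fin m`. -/
def cycleGraph (m : ℕ) : SimpleGraph (Fin m) :=
  SimpleGraph.fromRel (fun a b => ((a : ℕ) + 1) % m = (b : ℕ))

open scoped Classical in
/-- The Nimber of a position of Jacob's Ladder on `C_m`: a position is the `Finset` of
not-yet-removed vertices, and a move at a remaining vertex `v` removes all remaining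
vertices at distance at most 2 from `v` in `C_m`. -/
noncomputable def jlGrundy (m : ℕ) (S : Finset (Fin m)) : ℕ :=
  mex (S.attach.image (fun v =>
    jlGrundy m (S.filter (fun u => 2 < (cycleGraph m).dist v.1 u))))
termination_by S.card
decreasing_by
  apply Finset.card_lt_card
  rw [Finset.ssubset_iff_of_subset (Finset.filter_subset _ _)]
  exact ⟨v.1, v.2, by simp [SimpleGraph.dist_self]⟩

end Toggle

/-- for `m > 3` and `k, ℓ` coprime to `m` with `2 ≤ k, ℓ ≤ m - 2` and
`k * ℓ ≡ 1 (mod m)`, the generalized Petersen graphs `P(m,k)` and `P(m,ℓ)` are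
isomorphic. -/
theorem statement7 (m k l : ℕ) (hm : 3 < m)
    (hk : Nat.Coprime k m) (hl : Nat.Coprime l m)
    (hk2 : 2 ≤ k) (hkm : k ≤ m - 2) (hl2 : 2 ≤ l) (hlm : l ≤ m - 2)
    (hmod : k * l ≡ 1 [MOD m]) :
    Nonempty (Toggle.petersen m k ≃g Toggle.petersen m l) := by
  haveI : NeZero m := ⟨by omega⟩
  have hm0 : 0 < m := by omega
  have hkl : (k : ZMod m) * (l : ZMod m) = 1 := by
    have h := (ZMod.natCast_eq_natCast_iff (k*l) 1 m).2 hmod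
    push_cast at h
    simpa using h
  have hul : IsUnit (l : ZMod m) := IsUnit.of_mul_eq_one _ (by rw [mul_comm]; exact hkl)
  have modiff : ∀ (a : ℕ) (j : Fin m), a % m = (j : ℕ) ↔ (a : ZMod m) = ((j:ℕ) : ZMod m) := by
    intro a j
    rw [ZMod.natCast_eq_natCast_iff', Nat.mod_eq_of_lt j.isLt]
  set f : Fin m → Fin m := fun i => ⟨l * i % m, Nat.mod_lt _ hm0⟩ with hf
  set g : Fin m → Fin m := fun j => ⟨k * j % m, Nat.mod_lt _ hm0⟩ with hg
  have hgf : ∀ i, g (f i) = i := by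
    intro i
    apply Fin.ext
    show (k * (l * i % m)) % m = (i:ℕ)
    rw [modiff]
    push_cast [ZMod.natCast_mod]
    rw [← mul_assoc, hkl, one_mul]
  have hfg : ∀ j, f (g j) = j := by
    intro j
    apply Fin.ext
    show (l * (k * j % m)) % m = (j:ℕ)
    rw [modiff]
    push_cast [ZMod.natCast_mod]
    rw [← mul_assoc, mul_comm (l:ZMod m) (k:ZMod m), hkl, one_mul]
  have hfeq : ∀ i j : Fin m, f i = f j ↔ i = j := by
    intro i j
    constructor
    · intro h; have h2 := congrArg g h; rwa [hgf, hgf] at h2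
    · intro h; rw [h]
  have cond1 : ∀ i j : Fin m, (l * (i:ℕ) + l) % m = l * (j:ℕ) % m ↔ ((i:ℕ) + 1) % m = (j:ℕ) := by
    intro i j
    rw [← ZMod.natCast_eq_natCast_iff', modiff]
    push_cast
    rw [show (l : ZMod m) * i + l = l * ((i:ZMod m) + 1) by ring, hul.mul_right_inj]
  have cond2 : ∀ i j : Fin m, (l * (i:ℕ) + 1) % m = l * (j:ℕ) % m ↔ ((i:ℕ) + k) % m = (j:ℕ) := by
    intro i j
    rw [← ZMod.natCast_eq_natCast_iff', modiff]
    push_cast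
    rw [show (1 : ZMod m) = l * k by rw [mul_comm]; exact hkl.symm,
      show (l : ZMod m) * i + l * k = l * ((i:ZMod m) + k) by ring, hul.mul_right_inj]
  have flip2 : ∀ a : Fin 2, a + 1 + 1 = a := by decide
  have h20 : (2 : Fin 2) = 0 := by decide
  have h21 : ¬ ((2:Fin 2) = 1) := by decide
  have h02 : (0:Fin 2) = 2 := by decide
  have h12 : ¬ ((1:Fin 2) = 2) := by decide
  have h01 : ¬ ((0:Fin 2) = 1) := by decide
  have h10 : ¬ ((1:Fin 2) = 0) := by decide
  refine ⟨⟨⟨fun p => (p.1 + 1, f p.2), fun p => (p.1 + 1, g p.2), ?_, ?_⟩, ?_⟩⟩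
  · intro p; simp [hgf, flip2]
  · intro p; simp [hfg, flip2]
  · intro a b
    rcases a with ⟨a1, i⟩
    rcases b with ⟨b1, j⟩
    fin_cases a1 <;> fin_cases b1 <;>
      simp only [Toggle.petersen, SimpleGraph.fromRel_adj, Equiv.coe_fn_mk, Prod.mk.injEq,
        ne_eq, not_and] <;>
      norm_num [hfeq, cond1, cond2, h20, h21, h02, h12, h01, h10] <;>
      simp [Fin.ext_iff, hf, cond1, cond2] <;> tauto
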